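/- Let (ω_{pq}) be a constant invertible skew-symmetric n×n complex matrix with inverse (η_{pq}). Suppose W : ℂ^{2n} → ℂ (in variables z_1,…,z_n, θ_1,…,θ_n) is smooth (holomorphic) and satisfies Plebański's second heavenly equations ∂²W/(∂θ_i ∂z_j) − ∂²W/(∂θ_j ∂z_i) = Σ_{p,q} η_{pq} · ∂²W/(∂θ_i ∂θ_p) · ∂²W/(∂θ_j ∂θ_q) for all i, j. Define vector fields h_i = ∂/∂z_i + Σ_{p,q} η_{pq} (∂²W/(∂θ_i ∂θ_p)) ∂/∂θ_q. Then the vector fields h_1, …, h_n pairwise commute: [h_i, h_j] = 0 for all i, j. -/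

import Mathlib

/- STATEMENT 1: If W satisfies Plebański's second heavenly equations (with
respect to the inverse η of a constant invertible skew matrix ω), then the
vector fields h_i = ∂/∂z_i + Σ_{p,q} η_{pq} (∂²W/∂θ_i∂θ_p) ∂/∂θ_q pairwise
commute.  Vector fields on ℂ^{2n} are functions E → E, with the usual bracket
[u,v](x) = Dv(x)(u x) − Du(x)(v x). -/

open scoped BigOperators

abbrev JSpace (n : ℕ) := (Fin n → ℂ) × (Fin n → ℂ)

/-- The tangent direction ∂/∂z_i. -/
def dzv (n : ℕ) (i : Fin n) : JSpace n := (Pi.single i 1, 0)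

/-- The tangent direction ∂/∂θ_i. -/
def dthv (n : ℕ) (i : Fin n) : JSpace n := (0, Pi.single i 1)

/-- Second partial ∂²W/∂θ_i∂θ_p. -/
noncomputable def Dthth {n : ℕ} (W : JSpace n → ℂ) (i p : Fin n) (x : JSpace n) : ℂ :=
  fderiv ℂ (fun y => fderiv ℂ W y (dthv n i)) x (dthv n p)

/-- Mixed partial ∂²W/∂θ_i∂z_j. -/
noncomputable def Dthz {n : ℕ} (W : JSpace n → ℂ) (i j : Fin n) (x : JSpace n) : ℂ :=
  fderiv ℂ (fun y => fderiv ℂ W y (dthv n i)) x (dzv n j)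

/-- The vector field h_i = ∂/∂z_i + Σ_{p,q} η_{pq} (∂²W/∂θ_i∂θ_p) ∂/∂θ_q. -/
noncomputable def hVF {n : ℕ} (ηM : Matrix (Fin n) (Fin n) ℂ) (W : JSpace n → ℂ)
    (i : Fin n) (x : JSpace n) : JSpace n :=
  dzv n i + (0, fun q => ∑ p, ηM p q * Dthth W i p x)

section Helpers

variable {n : ℕ}

lemma smooth_dW (W : JSpace n → ℂ) (hW : ContDiff ℂ ⊤ W) (v : JSpace n) :
    ContDiff ℂ ⊤ (fun y : JSpace n => fderiv ℂ W y v) :=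
  (ContinuousLinearMap.apply ℂ ℂ v).contDiff.comp (hW.fderiv_right le_top)

lemma swapDirs (f : JSpace n → ℂ) (hf : ContDiff ℂ ⊤ f) (a b x : JSpace n) :
    fderiv ℂ (fun y => fderiv ℂ f y a) x b = fderiv ℂ (fun y => fderiv ℂ f y b) x a := by
  have hd : DifferentiableAt ℂ (fderiv ℂ f) x :=
    ((hf.fderiv_right (m := 1) le_top).differentiable one_ne_zero).differentiableAt
  have h : ∀ v w : JSpace n,
      fderiv ℂ (fun y => fderiv ℂ f y v) x w = fderiv ℂ (fderiv ℂ f) x w v := by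
    intro v w
    have heq : (fun y => fderiv ℂ f y v) = (ContinuousLinearMap.apply ℂ ℂ v) ∘ (fderiv ℂ f) := rfl
    rw [heq, fderiv_comp x (ContinuousLinearMap.apply ℂ ℂ v).differentiableAt hd]
    simp
  rw [h a b, h b a]
  exact (hf.contDiffAt.isSymmSndFDerivAt (by norm_num)).eq b a

lemma smooth_Dthth (W : JSpace n → ℂ) (hW : ContDiff ℂ ⊤ W) (a b : Fin n) :
    ContDiff ℂ ⊤ (Dthth W a b) :=
  smooth_dW _ (smooth_dW W hW (dthv n a)) (dthv n b)

lemma smooth_Dthz (W : JSpace n → ℂ) (hW : ContDiff ℂ ⊤ W) (a b : Fin n) :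
    ContDiff ℂ ⊤ (Dthz W a b) :=
  smooth_dW _ (smooth_dW W hW (dthv n a)) (dzv n b)

lemma pair_eq_sum (f : Fin n → ℂ) : ((0, f) : JSpace n) = ∑ r, f r • dthv n r := by
  refine Prod.ext ?_ ?_
  · rw [Prod.fst_sum]
    simp [dthv]
  · rw [Prod.snd_sum]
    funext q
    rw [Finset.sum_apply, Finset.sum_eq_single q]
    · simp [dthv]
    · intro b _ hb
      simp [dthv, Pi.single_apply, hb]
    · simp

lemma fderiv_hVF (ηM : Matrix (Fin n) (Fin n) ℂ) (W : JSpace n → ℂ)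
    (hW : ContDiff ℂ ⊤ W) (j : Fin n) (x u : JSpace n) :
    fderiv ℂ (hVF ηM W j) x u
      = (0, fun q => ∑ p, ηM p q * fderiv ℂ (Dthth W j p) x u) := by
  have hg : ∀ a b : Fin n, DifferentiableAt ℂ (Dthth W a b) x := fun a b =>
    ((smooth_Dthth W hW a b).differentiable (by simp)).differentiableAt
  have hcomp : ∀ q : Fin n,
      DifferentiableAt ℂ (fun y => ∑ p, ηM p q * Dthth W j p y) x := by
    intro q
    exact DifferentiableAt.fun_sum fun p _ => (hg j p).const_mul _
  have h1 : hVF ηM W j = fun y =>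
      dzv n j + (((fun _ : JSpace n => (0 : Fin n → ℂ)) y,
        (fun y (q : Fin n) => ∑ p, ηM p q * Dthth W j p y) y) : JSpace n) := rfl
  rw [h1, fderiv_const_add]
  rw [DifferentiableAt.fderiv_prodMk (differentiableAt_const _)
    (differentiableAt_pi.2 hcomp)]
  rw [fderiv_pi hcomp]
  have h2 : ∀ q : Fin n, fderiv ℂ (fun y => ∑ p, ηM p q * Dthth W j p y) x u
      = ∑ p, ηM p q * fderiv ℂ (Dthth W j p) x u := by
    intro q
    rw [fderiv_fun_sum fun p _ => (hg j p).const_mul _]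
    rw [ContinuousLinearMap.sum_apply]
    refine Finset.sum_congr rfl fun p _ => ?_
    rw [fderiv_const_mul (hg j p)]
    simp
  simp only [ContinuousLinearMap.prod_apply, fderiv_const_apply, Pi.zero_apply,
    ContinuousLinearMap.zero_apply, ContinuousLinearMap.pi_apply]
  exact congrArg _ (funext h2)

end Helpers

theorem heavenly_implies_commuting {n : ℕ}
    (ωM ηM : Matrix (Fin n) (Fin n) ℂ)
    (hskew : ωM.transpose = -ωM) (hinv : ωM * ηM = 1)
    (W : JSpace n → ℂ) (hW : ContDiff ℂ ⊤ W)
    (heavenly : ∀ (x : JSpace n) (i j : Fin n),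
      Dthz W i j x - Dthz W j i x
        = ∑ p, ∑ q, ηM p q * Dthth W i p x * Dthth W j q x) :
    ∀ (x : JSpace n) (i j : Fin n),
      fderiv ℂ (hVF ηM W j) x (hVF ηM W i x)
        - fderiv ℂ (hVF ηM W i) x (hVF ηM W j x) = 0 := by
  intro x i j
  -- η is skew-symmetric
  have hηskew : ∀ p q, ηM q p = - ηM p q := by
    have h1 : (-ηM.transpose) * ωM = 1 := by
      have h := congrArg Matrix.transpose hinv
      rw [Matrix.transpose_mul, Matrix.transpose_one, hskew] at h
      rw [Matrix.neg_mul, ← Matrix.mul_neg]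
      exact h
    have h2 : -ηM.transpose = ηM := by
      calc -ηM.transpose = (-ηM.transpose) * (ωM * ηM) := by rw [hinv, Matrix.mul_one]
        _ = ((-ηM.transpose) * ωM) * ηM := by rw [Matrix.mul_assoc]
        _ = ηM := by rw [h1, Matrix.one_mul]
    intro p q
    have := congrFun (congrFun h2 p) q
    simp only [Matrix.neg_apply, Matrix.transpose_apply] at this
    rw [← this, neg_neg]
  -- abbreviations
  have hg : ∀ a b : Fin n, DifferentiableAt ℂ (Dthth W a b) x := fun a b =>
    ((smooth_Dthth W hW a b).differentiable (by simp)).differentiableAt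
  -- symmetry of third derivatives in the two θ-directions
  have hTsym : ∀ (a b c : Fin n),
      fderiv ℂ (Dthth W a b) x (dthv n c) = fderiv ℂ (Dthth W a c) x (dthv n b) := by
    intro a b c
    exact swapDirs _ (smooth_dW W hW (dthv n a)) (dthv n b) (dthv n c) x
  -- mixed symmetry
  have hAsym : ∀ (a b c : Fin n),
      fderiv ℂ (Dthz W a b) x (dthv n c) = fderiv ℂ (Dthth W a c) x (dzv n b) := by
    intro a b c
    exact swapDirs _ (smooth_dW W hW (dthv n a)) (dzv n b) (dthv n c) x
  -- differentiated heavenly equation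
  have hC : ∀ k : Fin n,
      fderiv ℂ (Dthth W i k) x (dzv n j) - fderiv ℂ (Dthth W j k) x (dzv n i)
        = ∑ s, ∑ t, ηM s t * (fderiv ℂ (Dthth W i s) x (dthv n k) * Dthth W j t x
            + Dthth W i s x * fderiv ℂ (Dthth W j t) x (dthv n k)) := by
    intro k
    have hfun : (fun y => Dthz W i j y - Dthz W j i y)
        = (fun y => ∑ p, ∑ q, ηM p q * Dthth W i p y * Dthth W j q y) :=
      funext fun y => heavenly y i j
    have hder := congrArg (fun f => fderiv ℂ f x (dthv n k)) hfun
    beta_reduce at hder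
    have hz : ∀ a b : Fin n, DifferentiableAt ℂ (Dthz W a b) x := fun a b =>
      ((smooth_Dthz W hW a b).differentiable (by simp)).differentiableAt
    have hL : fderiv ℂ (fun y => Dthz W i j y - Dthz W j i y) x (dthv n k)
        = fderiv ℂ (Dthz W i j) x (dthv n k) - fderiv ℂ (Dthz W j i) x (dthv n k) := by
      rw [fderiv_fun_sub (hz i j) (hz j i)]; simp
    have hR : fderiv ℂ (fun y => ∑ p, ∑ q, ηM p q * Dthth W i p y * Dthth W j q y) x (dthv n k)
        = ∑ s, ∑ t, ηM s t * (fderiv ℂ (Dthth W i s) x (dthv n k) * Dthth W j t x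
            + Dthth W i s x * fderiv ℂ (Dthth W j t) x (dthv n k)) := by
      have hd1 : ∀ p q : Fin n, DifferentiableAt ℂ
          (fun y => ηM p q * Dthth W i p y * Dthth W j q y) x := by
        intro p q
        exact (((hg i p).const_mul _).mul (hg j q))
      rw [fderiv_fun_sum fun p _ => DifferentiableAt.fun_sum fun q _ => hd1 p q]
      rw [ContinuousLinearMap.sum_apply]
      refine Finset.sum_congr rfl fun s _ => ?_
      rw [fderiv_fun_sum fun q _ => hd1 s q, ContinuousLinearMap.sum_apply]
      refine Finset.sum_congr rfl fun t _ => ?_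
      have : (fun y => ηM s t * Dthth W i s y * Dthth W j t y)
          = fun y => (fun y => ηM s t * Dthth W i s y) y * Dthth W j t y := rfl
      rw [this, fderiv_fun_mul ((hg i s).const_mul _) (hg j t)]
      rw [fderiv_const_mul (hg i s)]
      simp only [ContinuousLinearMap.add_apply, ContinuousLinearMap.coe_smul',
        Pi.smul_apply, smul_eq_mul, ContinuousLinearMap.smul_apply]
      ring
    rw [hL, hR] at hder
    calc fderiv ℂ (Dthth W i k) x (dzv n j) - fderiv ℂ (Dthth W j k) x (dzv n i)
        = fderiv ℂ (Dthz W i j) x (dthv n k) - fderiv ℂ (Dthz W j i) x (dthv n k) := by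
          rw [hAsym i j k, hAsym j i k]
      _ = _ := hder
  -- decompose the vector field value and use linearity
  have hlin : ∀ (a b m : Fin n),
      fderiv ℂ (Dthth W a b) x (hVF ηM W m x)
        = fderiv ℂ (Dthth W a b) x (dzv n m)
          + ∑ r, (∑ s, ηM s r * Dthth W m s x) * fderiv ℂ (Dthth W a b) x (dthv n r) := by
    intro a b m
    have : hVF ηM W m x = dzv n m + ∑ r, (∑ s, ηM s r * Dthth W m s x) • dthv n r := by
      rw [hVF, pair_eq_sum]
    rw [this, map_add, map_sum]
    congr 1
    refine Finset.sum_congr rfl fun r _ => ?_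
    rw [map_smul]
    simp [smul_eq_mul]
  -- main computation
  rw [fderiv_hVF ηM W hW j x (hVF ηM W i x), fderiv_hVF ηM W hW i x (hVF ηM W j x)]
  rw [Prod.mk_sub_mk]
  refine Prod.ext (by simp) ?_
  show (fun q => ∑ p, ηM p q * fderiv ℂ (Dthth W j p) x (hVF ηM W i x))
      - (fun q => ∑ p, ηM p q * fderiv ℂ (Dthth W i p) x (hVF ηM W j x)) = 0
  funext q
  simp only [Pi.sub_apply, Pi.zero_apply, ← Finset.sum_sub_distrib]
  refine Finset.sum_eq_zero fun p _ => ?_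
  rw [hlin j p i, hlin i p j]
  have hsub : fderiv ℂ (Dthth W j p) x (dzv n i) - fderiv ℂ (Dthth W i p) x (dzv n j)
      = -∑ s, ∑ t, ηM s t * (fderiv ℂ (Dthth W i s) x (dthv n p) * Dthth W j t x
          + Dthth W i s x * fderiv ℂ (Dthth W j t) x (dthv n p)) := by
    rw [← hC p]; ring
  have hS1 : ∑ r, (∑ s, ηM s r * Dthth W i s x) * fderiv ℂ (Dthth W j p) x (dthv n r)
      = ∑ s, ∑ t, ηM s t * (Dthth W i s x * fderiv ℂ (Dthth W j t) x (dthv n p)) := by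
    simp only [Finset.sum_mul]
    conv_lhs => rw [Finset.sum_comm]
    refine Finset.sum_congr rfl fun s _ => Finset.sum_congr rfl fun t _ => ?_
    rw [hTsym j t p]
    ring
  have hS2 : ∑ r, (∑ s, ηM s r * Dthth W j s x) * fderiv ℂ (Dthth W i p) x (dthv n r)
      = -∑ s, ∑ t, ηM s t * (fderiv ℂ (Dthth W i s) x (dthv n p) * Dthth W j t x) := by
    have step : ∑ r, (∑ s, ηM s r * Dthth W j s x) * fderiv ℂ (Dthth W i p) x (dthv n r)
        = ∑ r, ∑ s, -(ηM r s * (fderiv ℂ (Dthth W i r) x (dthv n p) * Dthth W j s x)) := by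
      simp only [Finset.sum_mul]
      refine Finset.sum_congr rfl fun r _ => Finset.sum_congr rfl fun s _ => ?_
      rw [hηskew r s, hTsym i p r]
      ring
    rw [step]
    simp only [Finset.sum_neg_distrib]
  have h := hC p
  simp only [mul_add, Finset.sum_add_distrib] at h
  rw [hS1, hS2]
  linear_combination ηM p q * (-h)
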